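/- Let G be a group, k a field, N ≥ 2, and R₁, R₂ : G → GL_N(k) two representations whose restrictions to the commutator subgroup G' coincide, and such that R₁(G') = R₂(G') contains SL_N(k). Then there exists a group homomorphism η : G → k^× such that R₂(g) = η(g)·R₁(g) for all g ∈ G. -/

import Mathlib

/-- Let `G` be a group, `k` a field, `N ≥ 2`, and `R₁, R₂ : G → GL_N(k)`
two representations whose restrictions to the commutator subgroup `G'` coincide, and such
that `R₁(G') = R₂(G')` contains `SL_N(k)`. Then there exists a homomorphism `η : G → kˣ`
with `R₂(g) = η(g) • R₁(g)` for all `g`. -/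
theorem stmt_3 {G : Type*} [Group G] {k : Type*} [Field k] {N : ℕ} (hN : 2 ≤ N)
    (R₁ R₂ : G →* GL (Fin N) k)
    (hres : ∀ g ∈ commutator G, R₁ g = R₂ g)
    (hSL : (Matrix.SpecialLinearGroup.toGL (n := Fin N) (R := k)).range ≤
      (commutator G).map R₁) :
    ∃ η : G →* kˣ, ∀ g : G,
      ((R₂ g : Matrix (Fin N) (Fin N) k)) = (η g : k) • ((R₁ g : Matrix (Fin N) (Fin N) k)) := by
  classical
  -- Step 1: for every `g`, `R₂ g = c • R₁ g` for some unit `c`.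
  have key : ∀ g : G, ∃ c : kˣ,
      ((R₂ g : Matrix (Fin N) (Fin N) k)) = (c : k) • ((R₁ g : Matrix (Fin N) (Fin N) k)) := by
    intro g
    set D : GL (Fin N) k := (R₁ g)⁻¹ * R₂ g with hD
    -- D commutes with every special linear matrix
    have hcomm : ∀ S : Matrix.SpecialLinearGroup (Fin N) k,
        Commute (S : Matrix (Fin N) (Fin N) k) (D : Matrix (Fin N) (Fin N) k) := by
      intro S
      obtain ⟨h, hhmem, hh⟩ := hSL ⟨S, rfl⟩
      have hgh : g * h * g⁻¹ ∈ commutator G :=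
        Subgroup.Normal.conj_mem inferInstance h hhmem g
      have e1 : R₂ g * R₁ h = R₁ g * R₁ h * (R₁ g)⁻¹ * R₂ g := by
        calc R₂ g * R₁ h = R₂ g * R₂ h := by rw [hres _ hhmem]
          _ = R₂ (g * h * g⁻¹) * R₂ g := by rw [← map_mul, ← map_mul]; congr 1; group
          _ = R₁ (g * h * g⁻¹) * R₂ g := by rw [hres _ hgh]
          _ = R₁ g * R₁ h * (R₁ g)⁻¹ * R₂ g := by rw [map_mul, map_mul, map_inv]
      have e2 : Commute (R₁ h) D := by
        have := congrArg (fun x => (R₁ g)⁻¹ * x) e1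
        unfold D
        rw [Commute, SemiconjBy]
        calc R₁ h * ((R₁ g)⁻¹ * R₂ g) = (R₁ g)⁻¹ * (R₁ g * R₁ h * (R₁ g)⁻¹ * R₂ g) := by group
          _ = (R₁ g)⁻¹ * (R₂ g * R₁ h) := by rw [← e1]
          _ = (R₁ g)⁻¹ * R₂ g * R₁ h := by group
      have := congrArg (Units.val) e2.eq
      have hcoe : ((R₁ h : GL (Fin N) k) : Matrix (Fin N) (Fin N) k) = S := by
        rw [hh]; rfl
      simpa [Units.val_mul, hcoe, Commute, SemiconjBy] using this
    -- hence D is scalar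
    obtain ⟨r, hr⟩ := Matrix.mem_range_scalar_of_commute_single
      (M := (D : Matrix (Fin N) (Fin N) k)) (fun i j hij => by
        have hS : Commute (Matrix.transvection i j (1 : k)) (D : Matrix (Fin N) (Fin N) k) :=
          hcomm ⟨Matrix.transvection i j 1, Matrix.det_transvection_of_ne i j hij 1⟩
        show Commute (Matrix.single i j (1 : k)) (D : Matrix (Fin N) (Fin N) k)
        have : Matrix.single i j (1 : k)
            = Matrix.transvection i j 1 - 1 := by
          simp [Matrix.transvection]
        rw [this]
        exact hS.sub_left (Commute.one_left _))
    have hr' : (D : Matrix (Fin N) (Fin N) k) = r • (1 : Matrix (Fin N) (Fin N) k) := by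
      rw [← hr]; simp [Matrix.scalar, Matrix.smul_one_eq_diagonal]
    haveI : Nonempty (Fin N) := ⟨⟨0, by omega⟩⟩
    have hrne : r ≠ 0 := by
      intro h0
      have hdet : (D : Matrix (Fin N) (Fin N) k).det ≠ 0 :=
        (Matrix.isUnit_iff_isUnit_det _).mp D.isUnit |>.ne_zero
      rw [hr', h0, zero_smul] at hdet
      exact hdet Matrix.det_zero
    refine ⟨Units.mk0 r hrne, ?_⟩
    have : R₂ g = R₁ g * D := by unfold D; group
    have := congrArg (Units.val) this
    rw [this]
    simp [Units.val_mul, hr', Matrix.mul_smul]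
  choose c hc using key
  -- uniqueness of the scalar
  haveI : Nonempty (Fin N) := ⟨⟨0, by omega⟩⟩
  have huniq : ∀ (g : G) (a b : k),
      a • ((R₁ g : Matrix (Fin N) (Fin N) k)) = b • ((R₁ g : Matrix (Fin N) (Fin N) k)) →
      a = b := by
    intro g a b hab
    have hne : ((R₁ g : Matrix (Fin N) (Fin N) k)) ≠ 0 := by
      intro h0
      have := (Matrix.isUnit_iff_isUnit_det _).mp (R₁ g).isUnit |>.ne_zero
      rw [h0] at this
      simp [Matrix.det_zero] at this
    have : (a - b) • ((R₁ g : Matrix (Fin N) (Fin N) k)) = 0 := by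
      rw [sub_smul, hab, sub_self]
    rcases smul_eq_zero.mp this with h | h
    · exact sub_eq_zero.mp h
    · exact absurd h hne
  refine ⟨MonoidHom.mk' c ?_, fun g => hc g⟩
  intro g h
  apply Units.ext
  apply huniq (g * h)
  rw [← hc (g * h)]
  have : ((R₂ (g * h) : Matrix (Fin N) (Fin N) k))
      = ((R₂ g : Matrix (Fin N) (Fin N) k)) * ((R₂ h : Matrix (Fin N) (Fin N) k)) := by
    rw [map_mul]; rfl
  rw [this, hc g, hc h, map_mul]
  simp [Matrix.smul_mul, Matrix.mul_smul, smul_smul, Units.val_mul, mul_comm]
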